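/- arXiv:2605.04181 — 5 statements merged into one kernel-verified Lean document; each statement's English description precedes it below -/
import Mathlib

section
/- Let λ > 0, 0 < κ ≤ 1, 0 < m < M with M·κ ≤ 1, and let a > 0, c₀ > 0. Let G : ℝ² → ℝ be measurable with G ≥ 0 on the positive half-packet 𝒫_λ⁺ = {(x,y) : 0 < x < λ, 0 < y < λ}, and suppose G(x,y) ≥ c₀·a·y for all (x,y) in the cone {0 < x < κλ, m·x < y < M·x}. Then the local hyperbolic mass satisfies ℋ_λ[G] ≥ c₀·a·κ·λ·∫_m^M s²/(1+s²)² ds. -/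
open MeasureTheory

/-- The leading hyperbolic compression kernel `K₀(x,y) = x·y/(x²+y²)²`. -/
noncomputable def K0 (x y : ℝ) : ℝ := x * y / (x ^ 2 + y ^ 2) ^ 2

/-- Lower bound in the packet–core coupling: if `G ≥ 0` on the positive half-packet
`𝒫_λ⁺` and `G(x,y) ≥ c₀·a·y` on the cone `{0 < x < κλ, m·x < y < M·x}`, then the
local hyperbolic mass `ℋ_λ[G] = ∫_{𝒫_λ⁺} K₀·G` is at least
`c₀·a·κ·λ·∫_m^M s²/(1+s²)² ds`. -/
theorem packet_core_lower_bound (lam κ m M a c₀ : ℝ)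
    (hlam : 0 < lam) (hκ0 : 0 < κ) (hκ : κ ≤ 1) (hm : 0 < m) (hmM : m < M)
    (hMκ : M * κ ≤ 1) (ha : 0 < a) (hc₀ : 0 < c₀)
    (G : ℝ × ℝ → ℝ) (hmeas : Measurable G)
    (hpos : ∀ p : ℝ × ℝ, 0 < p.1 → p.1 < lam → 0 < p.2 → p.2 < lam → 0 ≤ G p)
    (hcore : ∀ p : ℝ × ℝ, 0 < p.1 → p.1 < κ * lam → m * p.1 < p.2 → p.2 < M * p.1 →
      c₀ * a * p.2 ≤ G p) :
    ENNReal.ofReal (c₀ * a * κ * lam * ∫ s in m..M, s ^ 2 / (1 + s ^ 2) ^ 2)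
      ≤ ∫⁻ p in {p : ℝ × ℝ | 0 < p.1 ∧ p.1 < lam ∧ 0 < p.2 ∧ p.2 < lam},
          ENNReal.ofReal (K0 p.1 p.2 * G p) := by
  set I : ℝ := ∫ s in m..M, s ^ 2 / (1 + s ^ 2) ^ 2 with hI
  have hI0 : 0 ≤ I := by
    apply intervalIntegral.integral_nonneg hmM.le
    intro u hu
    positivity
  set cone : Set (ℝ × ℝ) := {p | 0 < p.1 ∧ p.1 < κ * lam ∧ m * p.1 < p.2 ∧ p.2 < M * p.1}
    with hconedef
  have hconemeas : MeasurableSet cone := by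
    apply MeasurableSet.inter (measurableSet_lt measurable_const measurable_fst)
    apply MeasurableSet.inter (measurableSet_lt measurable_fst measurable_const)
    exact MeasurableSet.inter
      (measurableSet_lt (measurable_fst.const_mul m) measurable_snd)
      (measurableSet_lt measurable_snd (measurable_fst.const_mul M))
  -- cone is inside the packet
  have hsub : cone ⊆ {p : ℝ × ℝ | 0 < p.1 ∧ p.1 < lam ∧ 0 < p.2 ∧ p.2 < lam} := by
    rintro ⟨x, y⟩ ⟨hx0, hxκ, hy1, hy2⟩
    have hxlam : x < lam := lt_of_lt_of_le hxκ (by nlinarith)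
    refine ⟨hx0, hxlam, lt_trans (by positivity) hy1, ?_⟩
    calc y < M * x := hy2
      _ ≤ M * (κ * lam) := by nlinarith
      _ ≤ lam := by nlinarith
  -- the comparison function
  set g : ℝ × ℝ → ℝ := fun p => c₀ * a * (p.1 * p.2 ^ 2 / (p.1 ^ 2 + p.2 ^ 2) ^ 2)
    with hgdef
  have hgmeas : Measurable g := by
    apply Measurable.const_mul
    exact (measurable_fst.mul (measurable_snd.pow_const 2)).div
      (((measurable_fst.pow_const 2).add (measurable_snd.pow_const 2)).pow_const 2)
  -- inner integral computation
  have inner_eq : ∀ x : ℝ, 0 < x →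
      (∫⁻ y in Set.Ioo (m * x) (M * x), ENNReal.ofReal (g (x, y)))
        = ENNReal.ofReal (c₀ * a * I) := by
    intro x hx
    have hx2 : (x : ℝ) ≠ 0 := ne_of_gt hx
    have hcont : Continuous fun y : ℝ => g (x, y) := by
      show Continuous fun y : ℝ => c₀ * a * (x * y ^ 2 / (x ^ 2 + y ^ 2) ^ 2)
      apply Continuous.mul continuous_const
      exact Continuous.div (continuous_const.mul (continuous_pow 2))
        ((continuous_const.add (continuous_pow 2)).pow 2) (fun y => by positivity)
    have hmle : m * x ≤ M * x := by nlinarith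
    have hint : IntegrableOn (fun y : ℝ => g (x, y)) (Set.Ioo (m * x) (M * x)) := by
      exact (hcont.integrableOn_Icc).mono_set Set.Ioo_subset_Icc_self
    have hnn : 0 ≤ᵐ[volume.restrict (Set.Ioo (m * x) (M * x))] fun y : ℝ => g (x, y) := by
      filter_upwards with y
      have : (0:ℝ) ≤ c₀ * a * (x * y ^ 2 / (x ^ 2 + y ^ 2) ^ 2) := by positivity
      simpa [hgdef] using this
    rw [← ofReal_integral_eq_lintegral_ofReal hint hnn]
    congr 1
    -- now a real integral computation
    have h1 : (∫ y in Set.Ioo (m * x) (M * x), g (x, y))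
        = ∫ y in (m*x)..(M*x), g (x, y) := by
      rw [intervalIntegral.integral_of_le hmle, integral_Ioc_eq_integral_Ioo]
    rw [h1]
    have hsub2 : (∫ y in (m*x)..(M*x), (fun y => y ^ 2 / (x ^ 2 + y ^ 2) ^ 2) y)
        = x⁻¹ * I := by
      have := intervalIntegral.integral_comp_mul_right
        (a := m) (b := M) (fun y => y ^ 2 / (x ^ 2 + y ^ 2) ^ 2) hx2
      have heq : (∫ s in m..M, (fun y => y ^ 2 / (x ^ 2 + y ^ 2) ^ 2) (s * x))
          = x⁻¹ * x⁻¹ * I := by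
        rw [hI, ← intervalIntegral.integral_const_mul]
        apply intervalIntegral.integral_congr
        intro s _
        simp only
        field_simp
      rw [heq] at this
      have := this.symm
      -- this : x⁻¹ • ∫ = x⁻¹ * x⁻¹ * I
      have h3 : (∫ y in m * x..M * x, y ^ 2 / (x ^ 2 + y ^ 2) ^ 2)
          = x * (x⁻¹ * x⁻¹ * I) := by
        have h4 : x * (x⁻¹ • ∫ y in m * x..M * x, y ^ 2 / (x ^ 2 + y ^ 2) ^ 2)
            = x * (x⁻¹ * x⁻¹ * I) := by rw [this]
        rw [smul_eq_mul, ← mul_assoc, mul_inv_cancel₀ hx2, one_mul] at h4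
        exact h4
      rw [h3]; field_simp
    have h2 : (∫ y in (m*x)..(M*x), g (x, y))
        = (c₀ * a * x) * ∫ y in (m*x)..(M*x), y ^ 2 / (x ^ 2 + y ^ 2) ^ 2 := by
      rw [← intervalIntegral.integral_const_mul]
      apply intervalIntegral.integral_congr
      intro y _
      simp only [hgdef]
      field_simp
    rw [h2, hsub2]
    field_simp
  -- Fubini for the cone integral
  have hFub : (∫⁻ p in cone, ENNReal.ofReal (g p))
      = ∫⁻ x in Set.Ioo 0 (κ * lam), ∫⁻ y in Set.Ioo (m * x) (M * x),
          ENNReal.ofReal (g (x, y)) := by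
    rw [← lintegral_indicator hconemeas]
    rw [Measure.volume_eq_prod]
    rw [lintegral_prod _ (Measurable.aemeasurable (by
      exact (hgmeas.ennreal_ofReal).indicator hconemeas))]
    rw [← lintegral_indicator measurableSet_Ioo]
    congr 1
    funext x
    by_cases hx : x ∈ Set.Ioo 0 (κ * lam)
    · rw [Set.indicator_of_mem hx, ← lintegral_indicator measurableSet_Ioo]
      congr 1
      funext y
      by_cases hy : y ∈ Set.Ioo (m * x) (M * x)
      · rw [Set.indicator_of_mem hy, Set.indicator_of_mem]
        exact ⟨hx.1, hx.2, hy.1, hy.2⟩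
      · rw [Set.indicator_of_notMem hy, Set.indicator_of_notMem]
        intro hmem
        exact hy ⟨hmem.2.2.1, hmem.2.2.2⟩
    · rw [Set.indicator_of_notMem hx]
      have : ∀ y : ℝ, cone.indicator (fun p => ENNReal.ofReal (g p)) (x, y) = 0 := by
        intro y
        apply Set.indicator_of_notMem
        intro hmem
        exact hx ⟨hmem.1, hmem.2.1⟩
      simp only [this, lintegral_const, zero_mul]
  -- compute the cone integral
  have hconeval : (∫⁻ p in cone, ENNReal.ofReal (g p))
      = ENNReal.ofReal (c₀ * a * κ * lam * I) := by
    rw [hFub]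
    have : ∀ x ∈ Set.Ioo (0:ℝ) (κ * lam),
        (∫⁻ y in Set.Ioo (m * x) (M * x), ENNReal.ofReal (g (x, y)))
          = ENNReal.ofReal (c₀ * a * I) := fun x hx => inner_eq x hx.1
    rw [setLIntegral_congr_fun measurableSet_Ioo this]
    rw [setLIntegral_const, Real.volume_Ioo]
    rw [← ENNReal.ofReal_mul (by positivity)]
    congr 1
    ring
  -- chain of inequalities
  calc ENNReal.ofReal (c₀ * a * κ * lam * I)
      = ∫⁻ p in cone, ENNReal.ofReal (g p) := hconeval.symm
    _ ≤ ∫⁻ p in cone, ENNReal.ofReal (K0 p.1 p.2 * G p) := by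
        apply setLIntegral_mono_ae' hconemeas
        apply MeasureTheory.ae_of_all
        rintro ⟨x, y⟩ ⟨hx0, hxκ, hy1, hy2⟩
        apply ENNReal.ofReal_le_ofReal
        have hy0 : 0 < y := lt_trans (by positivity) hy1
        have hK : K0 x y = x * y / (x ^ 2 + y ^ 2) ^ 2 := rfl
        have hGc : c₀ * a * y ≤ G (x, y) := hcore (x, y) hx0 hxκ hy1 hy2
        have hK0 : 0 ≤ K0 x y := by rw [hK]; positivity
        calc g (x, y) = K0 x y * (c₀ * a * y) := by
              rw [hK, hgdef]; simp only; field_simp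
          _ ≤ K0 x y * G (x, y) := by
              apply mul_le_mul_of_nonneg_left hGc hK0
    _ ≤ ∫⁻ p in {p : ℝ × ℝ | 0 < p.1 ∧ p.1 < lam ∧ 0 < p.2 ∧ p.2 < lam},
          ENNReal.ofReal (K0 p.1 p.2 * G p) := lintegral_mono_set hsub
end

section
/- Let λ > 0, 0 < δ ≤ 1/2, b > 0, and let 𝒦 = {(x,y) : 0 < x < λ, (1−δ)x < y < (1+δ)x} be the narrow diagonal cone. Suppose Γ : ℝ² → ℝ is differentiable in y on 𝒦 with Γ(x,y) ≥ (b/2)·y and ∂_y Γ(x,y) ≥ b/2 for all (x,y) ∈ 𝒦. Then ∫_𝒦 K₀(x,y)·∂_y(Γ²)(x,y) dx dy ≥ (1/2)·b²·λ·∫_{1−δ}^{1+δ} s²/(1+s²)² ds. -/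
open MeasureTheory

set_option maxHeartbeats 1000000 in
/-- Narrow diagonal source lower bound: on the narrow diagonal cone
`𝒦 = {0 < x < λ, (1−δ)x < y < (1+δ)x}`, if `Γ(x,y) ≥ (b/2)·y` and
`∂_yΓ(x,y) ≥ b/2`, then
`∫_𝒦 K₀·∂_y(Γ²) ≥ (1/2)·b²·λ·∫_{1−δ}^{1+δ} s²/(1+s²)² ds`. -/
theorem narrow_diagonal_source_lower_bound (lam δ b : ℝ)
    (hlam : 0 < lam) (hδ0 : 0 < δ) (hδ : δ ≤ 1 / 2) (hb : 0 < b)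
    (K : Set (ℝ × ℝ))
    (hK : K = {p : ℝ × ℝ | 0 < p.1 ∧ p.1 < lam ∧
      (1 - δ) * p.1 < p.2 ∧ p.2 < (1 + δ) * p.1})
    (Γ : ℝ → ℝ → ℝ)
    (hdiff : ∀ p ∈ K, DifferentiableAt ℝ (fun y' => Γ p.1 y') p.2)
    (hΓ : ∀ p ∈ K, b / 2 * p.2 ≤ Γ p.1 p.2)
    (hΓy : ∀ p ∈ K, b / 2 ≤ deriv (fun y' => Γ p.1 y') p.2) :
    ENNReal.ofReal
        (1 / 2 * b ^ 2 * lam * ∫ s in (1 - δ)..(1 + δ), s ^ 2 / (1 + s ^ 2) ^ 2)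
      ≤ ∫⁻ p in K, ENNReal.ofReal
          (K0 p.1 p.2 * deriv (fun y' => (Γ p.1 y') ^ 2) p.2) := by
  set c : ℝ := b ^ 2 / 2 with hc
  set I : ℝ := ∫ s in (1 - δ)..(1 + δ), s ^ 2 / (1 + s ^ 2) ^ 2 with hIdef
  have hδ1 : 0 < 1 - δ := by linarith
  have hI0 : 0 ≤ I :=
    intervalIntegral.integral_nonneg (by linarith) (fun s _ => by positivity)
  -- K is open, hence measurable
  have hKopen : IsOpen K := by
    rw [hK]
    exact ((isOpen_lt continuous_const continuous_fst).inter
      ((isOpen_lt continuous_fst continuous_const).inter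
        ((isOpen_lt (continuous_const.mul continuous_fst) continuous_snd).inter
          (isOpen_lt continuous_snd (continuous_const.mul continuous_fst)))))
  have hKm : MeasurableSet K := hKopen.measurableSet
  set f : ℝ × ℝ → ENNReal := fun p =>
    ENNReal.ofReal (c * (p.1 * p.2 ^ 2 / (p.1 ^ 2 + p.2 ^ 2) ^ 2)) with hfdef
  have hfm : Measurable f := by
    apply ENNReal.measurable_ofReal.comp
    exact measurable_const.mul
      ((measurable_fst.mul (measurable_snd.pow_const 2)).div
        (((measurable_fst.pow_const 2).add (measurable_snd.pow_const 2)).pow_const 2))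
  -- Step A: pointwise lower bound
  have hA : ∫⁻ p in K, f p ≤ ∫⁻ p in K, ENNReal.ofReal
      (K0 p.1 p.2 * deriv (fun y' => (Γ p.1 y') ^ 2) p.2) := by
    refine setLIntegral_mono' hKm (fun p hp => ?_)
    have hp' := hp
    rw [hK, Set.mem_setOf_eq] at hp'
    obtain ⟨hx0, hxl, hy1, hy2⟩ := hp'
    have hy0 : 0 < p.2 := lt_trans (by positivity) hy1
    have hder : deriv (fun y' => (Γ p.1 y') ^ 2) p.2
        = 2 * Γ p.1 p.2 * deriv (fun y' => Γ p.1 y') p.2 := by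
      have h := (hdiff p hp).hasDerivAt
      simpa using (h.fun_pow 2).deriv
    apply ENNReal.ofReal_le_ofReal
    rw [hder]
    have hK0 : 0 ≤ K0 p.1 p.2 := by
      unfold K0; positivity
    have h1 : b / 2 * p.2 * (b / 2) ≤ Γ p.1 p.2 * deriv (fun y' => Γ p.1 y') p.2 :=
      mul_le_mul (hΓ p hp) (hΓy p hp) (by positivity)
        (le_trans (by positivity) (hΓ p hp))
    have h2 : c * p.2 ≤ 2 * Γ p.1 p.2 * deriv (fun y' => Γ p.1 y') p.2 := by
      rw [hc]; nlinarith [h1]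
    calc c * (p.1 * p.2 ^ 2 / (p.1 ^ 2 + p.2 ^ 2) ^ 2)
        = K0 p.1 p.2 * (c * p.2) := by unfold K0; ring
      _ ≤ K0 p.1 p.2 * (2 * Γ p.1 p.2 * deriv (fun y' => Γ p.1 y') p.2) :=
          mul_le_mul_of_nonneg_left h2 hK0
  -- Step B: exact evaluation of the lower-bound integral
  have hB : ENNReal.ofReal (1 / 2 * b ^ 2 * lam * I) ≤ ∫⁻ p in K, f p := by
    rw [← lintegral_indicator hKm, MeasureTheory.Measure.volume_eq_prod,
      lintegral_prod _ (hfm.indicator hKm).aemeasurable]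
    have hinner : ∀ x : ℝ, ∫⁻ y, K.indicator f (x, y)
        = (Set.Ioo (0 : ℝ) lam).indicator (fun _ => ENNReal.ofReal (c * I)) x := by
      intro x
      by_cases hx : x ∈ Set.Ioo (0 : ℝ) lam
      · have hx0 : 0 < x := hx.1
        have hxne : x ≠ 0 := hx0.ne'
        have hrw : (fun y => K.indicator f (x, y))
            = (Set.Ioo ((1 - δ) * x) ((1 + δ) * x)).indicator (fun y => f (x, y)) := by
          funext y
          by_cases hy : y ∈ Set.Ioo ((1 - δ) * x) ((1 + δ) * x)
          · rw [Set.indicator_of_mem hy, Set.indicator_of_mem]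
            rw [hK, Set.mem_setOf_eq]
            exact ⟨hx.1, hx.2, hy.1, hy.2⟩
          · rw [Set.indicator_of_notMem hy, Set.indicator_of_notMem]
            rw [hK, Set.mem_setOf_eq]
            intro hmem
            exact hy ⟨hmem.2.2.1, hmem.2.2.2⟩
        rw [hrw, lintegral_indicator measurableSet_Ioo,
          Set.indicator_of_mem hx]
        have hg : Continuous (fun y : ℝ => c * (x * y ^ 2 / (x ^ 2 + y ^ 2) ^ 2)) := by
          apply continuous_const.mul
          apply Continuous.div (continuous_const.mul (continuous_pow 2))
            ((continuous_const.add (continuous_pow 2)).pow 2)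
          intro y; have : 0 < x ^ 2 + y ^ 2 := by positivity
          exact pow_ne_zero 2 this.ne'
        have hint : IntegrableOn (fun y : ℝ => c * (x * y ^ 2 / (x ^ 2 + y ^ 2) ^ 2))
            (Set.Ioo ((1 - δ) * x) ((1 + δ) * x)) :=
          (hg.integrableOn_Icc).mono_set Set.Ioo_subset_Icc_self
        rw [← ofReal_integral_eq_lintegral_ofReal hint
          (Filter.Eventually.of_forall (fun y => by positivity))]
        congr 1
        have hab : (1 - δ) * x ≤ (1 + δ) * x := by nlinarith
        rw [← MeasureTheory.integral_Ioc_eq_integral_Ioo,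
          ← intervalIntegral.integral_of_le hab]
        have hsub : ∫ y in ((1 - δ) * x)..((1 + δ) * x),
            c * (x * y ^ 2 / (x ^ 2 + y ^ 2) ^ 2)
            = ∫ y in ((1 - δ) * x)..((1 + δ) * x),
              (fun s : ℝ => c * (s ^ 2 / (1 + s ^ 2) ^ 2) / x) (y / x) := by
          apply intervalIntegral.integral_congr
          intro y _
          have hd : (0:ℝ) < (x ^ 2 + y ^ 2) ^ 2 := by positivity
          field_simp
        have hcomp := intervalIntegral.integral_comp_div
          (a := (1 - δ) * x) (b := (1 + δ) * x) (c := x)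
          (f := fun s : ℝ => c * (s ^ 2 / (1 + s ^ 2) ^ 2) / x) hxne
        rw [hsub, hcomp, mul_div_cancel_right₀ _ hxne, mul_div_cancel_right₀ _ hxne]
        have : ∫ s in (1 - δ)..(1 + δ), c * (s ^ 2 / (1 + s ^ 2) ^ 2) / x
            = c * I / x := by
          rw [intervalIntegral.integral_div, intervalIntegral.integral_const_mul]
        rw [this, smul_eq_mul]
        field_simp
      · have : ∀ y : ℝ, K.indicator f (x, y) = 0 := by
          intro y
          apply Set.indicator_of_notMem
          rw [hK, Set.mem_setOf_eq]
          intro hmem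
          exact hx ⟨hmem.1, hmem.2.1⟩
        simp [this, Set.indicator_of_notMem hx]
    simp_rw [hinner]
    rw [lintegral_indicator measurableSet_Ioo, setLIntegral_const,
      Real.volume_Ioo, ← ENNReal.ofReal_mul (by positivity)]
    apply ENNReal.ofReal_le_ofReal
    rw [hc]
    nlinarith [hI0]
  exact le_trans hB hA
end

section
/- Let c₁, c₂ > 0. There do not exist differentiable functions A, B : [0, ∞) → ℝ with A(0) > 0, B(0) > 0 such that A′(t) ≥ c₁·B(t)² and B′(t) ≥ c₂·A(t)·B(t) for all t ≥ 0. Equivalently, any solution of this differential inequality system with positive initial data blows up in finite time. -/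
open Set intervalIntegral MeasureTheory

/-- Monotonicity from a one-sided derivative bound on a convex subset of `[0,∞)`. -/
lemma mono_aux' {D : Set ℝ} (hD : Convex ℝ D) (hsub : D ⊆ Set.Ici (0:ℝ)) {f f' : ℝ → ℝ}
    (hf : ∀ t ∈ D, HasDerivWithinAt f (f' t) (Set.Ici 0) t)
    (h0 : ∀ t ∈ interior D, 0 ≤ f' t) : MonotoneOn f D := by
  refine monotoneOn_of_hasDerivWithinAt_nonneg hD
    (fun t ht => ((hf t ht).continuousWithinAt).mono hsub)
    (fun x hx => ((hf x (interior_subset hx)).mono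
      ((interior_subset.trans hsub)))) h0

/-- Finite-time blow-up of the comparison system (Theorem 9.1): there are no
globally defined differentiable `A, B : [0,∞) → ℝ` with positive initial data
satisfying `A′ ≥ c₁B²` and `B′ ≥ c₂AB` for all `t ≥ 0`. -/
theorem no_global_comparison_solution (c₁ c₂ : ℝ) (hc₁ : 0 < c₁) (hc₂ : 0 < c₂) :
    ¬ ∃ A B A' B' : ℝ → ℝ,
      0 < A 0 ∧ 0 < B 0 ∧
      ∀ t : ℝ, 0 ≤ t →
        HasDerivWithinAt A (A' t) (Set.Ici 0) t ∧
        HasDerivWithinAt B (B' t) (Set.Ici 0) t ∧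
        c₁ * (B t) ^ 2 ≤ A' t ∧
        c₂ * A t * B t ≤ B' t := by
  rintro ⟨A, B, A', B', hA0, hB0, hsys⟩
  have hA : ∀ t ∈ Set.Ici (0:ℝ), HasDerivWithinAt A (A' t) (Set.Ici 0) t :=
    fun t ht => (hsys t ht).1
  have hB : ∀ t ∈ Set.Ici (0:ℝ), HasDerivWithinAt B (B' t) (Set.Ici 0) t :=
    fun t ht => (hsys t ht).2.1
  have hA' : ∀ t ∈ Set.Ici (0:ℝ), c₁ * (B t) ^ 2 ≤ A' t := fun t ht => (hsys t ht).2.2.1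
  have hB' : ∀ t ∈ Set.Ici (0:ℝ), c₂ * A t * B t ≤ B' t := fun t ht => (hsys t ht).2.2.2
  -- A is monotone, hence positive
  have hAmono : MonotoneOn A (Set.Ici 0) := by
    refine mono_aux' (convex_Ici 0) le_rfl hA fun t ht => ?_
    have ht' : t ∈ Set.Ici (0:ℝ) := interior_subset ht
    exact le_trans (by positivity) (hA' t ht')
  have hApos : ∀ t ∈ Set.Ici (0:ℝ), 0 < A t :=
    fun t ht => lt_of_lt_of_le hA0 (hAmono (self_mem_Ici) ht ht)
  -- B is positive
  have hBpos : ∀ t ∈ Set.Ici (0:ℝ), 0 < B t := by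
    by_contra h
    push_neg at h
    obtain ⟨t₁, ht₁, hBt₁⟩ := h
    set s : Set ℝ := Set.Ici 0 ∩ B ⁻¹' Set.Iic 0 with hs
    have hBc : ContinuousOn B (Set.Ici 0) := fun t ht => (hB t ht).continuousWithinAt
    have hsclosed : IsClosed s :=
      ContinuousOn.preimage_isClosed_of_isClosed hBc isClosed_Ici isClosed_Iic
    have hsne : s.Nonempty := ⟨t₁, ht₁, hBt₁⟩
    have hsbdd : BddBelow s := ⟨0, fun x hx => hx.1⟩
    set T := sInf s with hT
    have hTs : T ∈ s := hsclosed.csInf_mem hsne hsbdd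
    have hT0 : 0 ≤ T := hTs.1
    have hBT : B T ≤ 0 := hTs.2
    have hTpos : 0 < T := by
      rcases hT0.lt_or_eq with h' | h'
      · exact h'
      · exact absurd hBT (by rw [← h']; exact not_le.2 hB0)
    have hlt : ∀ u, 0 ≤ u → u < T → 0 < B u := by
      intro u hu huT
      by_contra hu'
      exact absurd (csInf_le hsbdd ⟨hu, not_lt.1 hu'⟩) (not_le.2 huT)
    have hmono : MonotoneOn B (Set.Icc 0 T) := by
      refine mono_aux' (convex_Icc 0 T) (Set.Icc_subset_Ici_self)
        (fun t ht => hB t ht.1) ?_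
      intro t ht
      rw [interior_Icc] at ht
      have ht0 : (0:ℝ) ≤ t := le_of_lt ht.1
      refine le_trans ?_ (hB' t ht0)
      have := hApos t ht0
      have := hlt t ht0 ht.2
      positivity
    have : 0 < B T := lt_of_lt_of_le hB0 (hmono ⟨le_rfl, hT0⟩ ⟨hT0, le_rfl⟩ hT0)
    exact absurd hBT (not_le.2 this)
  -- B is monotone
  have hBmono : MonotoneOn B (Set.Ici 0) := by
    refine mono_aux' (convex_Ici 0) le_rfl hB fun t ht => ?_
    have ht' : t ∈ Set.Ici (0:ℝ) := interior_subset ht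
    refine le_trans ?_ (hB' t ht')
    have := hApos t ht'
    have := hBpos t ht'
    positivity
  have hBge : ∀ t ∈ Set.Ici (0:ℝ), B 0 ≤ B t :=
    fun t ht => hBmono self_mem_Ici ht ht
  -- the primitive of c₁ B²
  set g : ℝ → ℝ := fun u => c₁ * B u ^ 2 with hg
  have hgc : ContinuousOn g (Set.Ici 0) := by
    have hBc : ContinuousOn B (Set.Ici 0) := fun t ht => (hB t ht).continuousWithinAt
    fun_prop
  have hint : ∀ t ∈ Set.Ici (0:ℝ), IntervalIntegrable g volume 0 t := by
    intro t ht
    refine (hgc.mono ?_).intervalIntegrable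
    rw [Set.uIcc_of_le ht]
    exact Set.Icc_subset_Ici_self
  set Q : ℝ → ℝ := fun t => A 0 + ∫ u in (0:ℝ)..t, g u with hQ
  have hQd : ∀ t ∈ Set.Ici (0:ℝ), HasDerivWithinAt Q (g t) (Set.Ici 0) t := by
    intro t ht
    have key : HasDerivWithinAt (fun t => ∫ u in (0:ℝ)..t, g u) (g t) (Set.Ici 0) t := by
      rcases (show (0:ℝ) ≤ t from ht).lt_or_eq with h' | h'
      · have hmem : Set.Ici (0:ℝ) ∈ nhds t := Ici_mem_nhds h'
        have hca : ContinuousAt g t := hgc.continuousAt hmem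
        have hmeas : StronglyMeasurableAtFilter g (nhds t) volume := by
          have : StronglyMeasurableAtFilter g (nhdsWithin t (Set.Ici 0)) volume :=
            hgc.stronglyMeasurableAtFilter_nhdsWithin measurableSet_Ici t
          rwa [nhdsWithin_eq_nhds.2 hmem] at this
        exact (intervalIntegral.integral_hasDerivAt_right (hint t ht)
          hmeas hca).hasDerivWithinAt
      · subst h'
        exact intervalIntegral.integral_hasDerivWithinAt_right (t := Set.Ioi 0)
          (hint 0 self_mem_Ici)
          ((hgc.mono (Set.Ioi_subset_Ici_self)).stronglyMeasurableAtFilter_nhdsWithin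
            measurableSet_Ioi 0)
          ((hgc 0 self_mem_Ici).mono Set.Ioi_subset_Ici_self)
    exact key.const_add (A 0)
  have hQ0 : Q 0 = A 0 := by simp [hQ]
  -- Q ≤ A
  have hQA : ∀ t ∈ Set.Ici (0:ℝ), Q t ≤ A t := by
    have hmono : MonotoneOn (fun t => A t - Q t) (Set.Ici 0) := by
      refine mono_aux' (convex_Ici 0) le_rfl
        (fun t ht => (hA t ht).sub (hQd t ht)) fun t ht => ?_
      have ht' : t ∈ Set.Ici (0:ℝ) := interior_subset ht
      have := hA' t ht'
      simp only [sub_nonneg, hg]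
      linarith
    intro t ht
    have := hmono self_mem_Ici ht ht
    simp only [hQ0] at this
    linarith [this]
  -- Q is monotone and positive
  have hQmono : MonotoneOn Q (Set.Ici 0) := by
    refine mono_aux' (convex_Ici 0) le_rfl hQd fun t ht => ?_
    have := interior_subset ht
    positivity
  have hQpos : ∀ t ∈ Set.Ici (0:ℝ), 0 < Q t := by
    intro t ht
    have := hQmono self_mem_Ici ht ht
    rw [hQ0] at this; linarith
  -- F = c₁ B² − c₂ Q² is monotone
  set F : ℝ → ℝ := fun t => c₁ * B t ^ 2 - c₂ * Q t ^ 2 with hF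
  have hFd : ∀ t ∈ Set.Ici (0:ℝ), HasDerivWithinAt F
      (c₁ * (2 * B t ^ 1 * B' t) - c₂ * (2 * Q t ^ 1 * g t)) (Set.Ici 0) t := by
    intro t ht
    exact (((hB t ht).pow 2).const_mul c₁).sub (((hQd t ht).pow 2).const_mul c₂)
  have hFmono : MonotoneOn F (Set.Ici 0) := by
    refine mono_aux' (convex_Ici 0) le_rfl hFd fun t ht => ?_
    have ht' : t ∈ Set.Ici (0:ℝ) := interior_subset ht
    have h1 : c₂ * Q t * B t ≤ B' t := by
      refine le_trans ?_ (hB' t ht')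
      exact mul_le_mul_of_nonneg_right
        (mul_le_mul_of_nonneg_left (hQA t ht') hc₂.le) (hBpos t ht').le
    have hBp := hBpos t ht'
    have h3 : 2 * c₁ * B t * (c₂ * Q t * B t) ≤ 2 * c₁ * B t * B' t :=
      mul_le_mul_of_nonneg_left h1 (by positivity)
    simp only [pow_one, hg]
    nlinarith [h3]
  have hFge : ∀ t ∈ Set.Ici (0:ℝ), F 0 ≤ F t := fun t ht => hFmono self_mem_Ici ht ht
  -- linear growth of Q
  have hQlin : ∀ t ∈ Set.Ici (0:ℝ), A 0 + c₁ * B 0 ^ 2 * t ≤ Q t := by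
    have hmono : MonotoneOn (fun t => Q t - c₁ * B 0 ^ 2 * t) (Set.Ici 0) := by
      refine mono_aux' (convex_Ici 0) le_rfl
        (fun t ht => (hQd t ht).sub ((hasDerivWithinAt_id t _).const_mul (c₁ * B 0 ^ 2)))
        fun t ht => ?_
      have ht' : t ∈ Set.Ici (0:ℝ) := interior_subset ht
      have h1 := hBge t ht'
      have h2 := hB0.le
      simp only [mul_one, hg, sub_nonneg]
      exact mul_le_mul_of_nonneg_left (pow_le_pow_left₀ h2 h1 2) hc₁.le
    intro t ht
    have := hmono self_mem_Ici ht ht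
    simp only [hQ0, mul_zero, sub_zero] at this
    linarith
  clear_value g Q F
  -- choose t₀ with (c₂/2) Q t₀² ≥ -F 0
  set R : ℝ := Real.sqrt (2 * max 0 (-F 0) / c₂) with hR
  set t₀ : ℝ := max 0 ((R - A 0) / (c₁ * B 0 ^ 2)) with ht₀def
  have ht₀0 : (0:ℝ) ≤ t₀ := le_max_left _ _
  have hQt₀ : R ≤ Q t₀ := by
    have h1 := hQlin t₀ ht₀0
    have h2 : (R - A 0) / (c₁ * B 0 ^ 2) ≤ t₀ := le_max_right _ _
    have hd : 0 < c₁ * B 0 ^ 2 := by positivity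
    rw [div_le_iff₀ hd] at h2
    nlinarith
  have hRsq : 2 * max 0 (-F 0) / c₂ = R ^ 2 := by
    rw [hR, Real.sq_sqrt]
    positivity
  have hkey : ∀ t, t₀ ≤ t → c₂ / 2 * Q t ^ 2 ≤ g t := by
    intro t ht
    have ht' : (0:ℝ) ≤ t := le_trans ht₀0 ht
    have h1 := hFge t ht'
    have h2 : Q t₀ ≤ Q t := hQmono ht₀0 ht' ht
    have hRpos : 0 ≤ R := Real.sqrt_nonneg _
    have hR2 : R ^ 2 ≤ Q t ^ 2 := by nlinarith
    have hF0 : -F 0 ≤ max 0 (-F 0) := le_max_right _ _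
    have : -F 0 ≤ c₂ / 2 * Q t ^ 2 := by
      rw [← hRsq] at hR2
      rw [div_le_iff₀ hc₂] at hR2
      nlinarith
    simp only [hF, hg] at h1 this ⊢
    linarith
  -- final blow-up argument via ψ = Q⁻¹ + (c₂/2) t
  have hQne : ∀ t ∈ Set.Ici (0:ℝ), Q t ≠ 0 := fun t ht => (hQpos t ht).ne'
  have hψmono : MonotoneOn (fun t => -((Q t)⁻¹ + c₂ / 2 * t)) (Set.Ici t₀) := by
    refine mono_aux' (f' := fun t => -(-g t / Q t ^ 2 + c₂ / 2 * 1))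
      (convex_Ici t₀) (Set.Ici_subset_Ici.2 ht₀0)
      (fun t ht => ?_) (fun t ht => ?_)
    · have ht' : (0:ℝ) ≤ t := le_trans ht₀0 ht
      exact (((hQd t ht').inv (hQne t ht')).add
        ((hasDerivWithinAt_id t _).const_mul (c₂ / 2))).neg
    · rw [interior_Ici] at ht
      have ht' : t₀ ≤ t := le_of_lt ht
      have ht'' : (0:ℝ) ≤ t := le_trans ht₀0 ht'
      have h1 := hkey t ht'
      have hQp := hQpos t ht''
      have h2 : c₂ / 2 ≤ g t / Q t ^ 2 := by
        rw [le_div_iff₀ (by positivity)]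
        linarith
      have : -g t / Q t ^ 2 + c₂ / 2 * 1 ≤ 0 := by
        rw [neg_div]
        linarith
      simpa using neg_nonneg.2 this
  -- evaluate at a late time
  set T₁ : ℝ := t₀ + 2 / c₂ * (Q t₀)⁻¹ + 1 with hT₁
  have hQt₀pos : 0 < Q t₀ := hQpos t₀ ht₀0
  have hT₁ge : t₀ ≤ T₁ := by
    have h : 0 < 2 / c₂ * (Q t₀)⁻¹ := by positivity
    rw [hT₁]
    linarith
  have := hψmono (self_mem_Ici) (Set.mem_Ici.2 hT₁ge) hT₁ge
  have hQT₁pos : 0 < Q T₁ := hQpos T₁ (le_trans ht₀0 hT₁ge)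
  have hinv : 0 < (Q T₁)⁻¹ := by positivity
  have hc2' : c₂ / 2 * (2 / c₂ * (Q t₀)⁻¹) = (Q t₀)⁻¹ := by
    field_simp
  rw [hT₁] at this
  nlinarith [this, hinv, hc₂, hc2']
end

section
/- Let T ∈ (0, ∞], let σ : [0,T) → [0,∞) be continuous, and let ρ : [0,T) → [0,∞) be differentiable. Let c₀, C > 0, ε > 0, δ ≥ 0 satisfy δ ≤ c₀·ε/2 and 32·C·ε ≤ c₀. Assume ρ′(t) ≤ −c₀·σ(t)·ρ(t) + δ·σ(t) + C·σ(t)·ρ(t)² for all t ∈ [0,T), and ρ(0) ≤ ε. Then ρ(t) ≤ 2·ε for all t ∈ [0,T). -/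
/-- Radial-swirl anisotropy persistence (ODE content of Lemma 7.2): if
`ρ ≥ 0` satisfies `ρ′ ≤ −c₀σρ + δσ + Cσρ²` on `[0,T)` with `σ ≥ 0`
continuous, `δ ≤ c₀ε/2`, `32Cε ≤ c₀`, and `ρ(0) ≤ ε`, then `ρ ≤ 2ε` on
`[0,T)`. -/
theorem anisotropy_persistence (T : EReal) (hT : 0 < T)
    (S : Set ℝ) (hS : S = {t : ℝ | 0 ≤ t ∧ (t : EReal) < T})
    (σ ρ : ℝ → ℝ) (hσc : ContinuousOn σ S) (hσ0 : ∀ t ∈ S, 0 ≤ σ t)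
    (hρ0 : ∀ t ∈ S, 0 ≤ ρ t)
    (c₀ C ε δ : ℝ) (hc₀ : 0 < c₀) (hC : 0 < C) (hε : 0 < ε) (hδ : 0 ≤ δ)
    (hδε : δ ≤ c₀ * ε / 2) (hCε : 32 * C * ε ≤ c₀)
    (hρ : ∀ t ∈ S, ∃ d, HasDerivWithinAt ρ d S t ∧
      d ≤ -c₀ * σ t * ρ t + δ * σ t + C * σ t * (ρ t) ^ 2)
    (h0 : ρ 0 ≤ ε) :
    ∀ t ∈ S, ρ t ≤ 2 * ε := by
  intro t₁ ht₁
  by_contra hcon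
  push_neg at hcon
  rw [hS] at ht₁
  obtain ⟨ht₁0, ht₁T⟩ := ht₁
  have hsub : Set.Icc 0 t₁ ⊆ S := by
    rw [hS]; intro t ht
    exact ⟨ht.1, lt_of_le_of_lt (EReal.coe_le_coe_iff.mpr ht.2) ht₁T⟩
  have hcont : ContinuousOn ρ (Set.Icc 0 t₁) := fun t ht =>
    ((hρ t (hsub ht)).choose_spec.1.continuousWithinAt).mono hsub
  have hρ0lt : ρ 0 < 2 * ε := lt_of_le_of_lt h0 (by linarith)
  have ht₁pos : 0 < t₁ := by
    rcases eq_or_lt_of_le ht₁0 with h | h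
    · exact absurd hcon (by rw [← h]; linarith)
    · exact h
  -- the first time `ρ` reaches `2ε`
  set B := Set.Icc 0 t₁ ∩ ρ ⁻¹' Set.Ici (2 * ε) with hBdef
  have hBne : B.Nonempty := ⟨t₁, ⟨ht₁0, le_refl _⟩, le_of_lt hcon⟩
  have hBbdd : BddBelow B := ⟨0, fun t ht => ht.1.1⟩
  have hBclosed : IsClosed B :=
    hcont.preimage_isClosed_of_isClosed isClosed_Icc isClosed_Ici
  set b := sInf B with hbdef
  have hbB : b ∈ B := hBclosed.csInf_mem hBne hBbdd
  have hbIcc : b ∈ Set.Icc 0 t₁ := hbB.1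
  have hρb2 : 2 * ε ≤ ρ b := hbB.2
  have hbpos : 0 < b := by
    rcases eq_or_lt_of_le hbIcc.1 with h | h
    · exact absurd hρb2 (by rw [← h]; linarith)
    · exact h
  have hlt : ∀ t ∈ Set.Icc 0 t₁, t < b → ρ t < 2 * ε := by
    intro t ht htb
    by_contra h
    push_neg at h
    exact absurd (csInf_le hBbdd ⟨ht, h⟩) (not_le.mpr htb)
  have hρbeq : ρ b = 2 * ε := by
    rcases eq_or_lt_of_le hρb2 with h | h
    · exact h.symm
    · exfalso
      have hev : ∀ᶠ t in nhdsWithin b (Set.Icc 0 t₁), 2 * ε < ρ t :=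
        (hcont b hbIcc).eventually (isOpen_Ioi.mem_nhds h)
      have hIoosub : Set.Ioo 0 b ⊆ Set.Icc 0 t₁ := fun t ht =>
        ⟨le_of_lt ht.1, le_trans (le_of_lt ht.2) hbIcc.2⟩
      have hne : (nhdsWithin b (Set.Ioo 0 b)).NeBot := by
        refine mem_closure_iff_nhdsWithin_neBot.mp ?_
        rw [closure_Ioo (ne_of_lt hbpos)]
        exact ⟨le_of_lt hbpos, le_refl _⟩
      obtain ⟨t, ht2, htmem⟩ :=
        ((hev.filter_mono (nhdsWithin_mono b hIoosub)).and
          eventually_mem_nhdsWithin).exists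
      exact absurd (csInf_le hBbdd ⟨hIoosub htmem, le_of_lt ht2⟩)
        (not_le.mpr htmem.2)
  -- the last time before `b` where `ρ ≤ 3ε/2`
  have hIccb : Set.Icc 0 b ⊆ Set.Icc 0 t₁ := fun t ht =>
    ⟨ht.1, le_trans ht.2 hbIcc.2⟩
  set A := Set.Icc 0 b ∩ ρ ⁻¹' Set.Iic (3 * ε / 2) with hAdef
  have hAne : A.Nonempty := ⟨0, ⟨le_refl _, le_of_lt hbpos⟩, by
    simpa using le_trans h0 (by linarith)⟩
  have hAbdd : BddAbove A := ⟨b, fun t ht => ht.1.2⟩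
  have hAclosed : IsClosed A :=
    (hcont.mono hIccb).preimage_isClosed_of_isClosed isClosed_Icc isClosed_Iic
  set a := sSup A with hadef
  have haA : a ∈ A := hAclosed.csSup_mem hAne hAbdd
  have haIcc : a ∈ Set.Icc 0 b := haA.1
  have hρa : ρ a ≤ 3 * ε / 2 := haA.2
  have hab : a < b := by
    rcases eq_or_lt_of_le haIcc.2 with h | h
    · exact absurd hρa (by rw [h, hρbeq]; linarith)
    · exact h
  have hgt : ∀ t ∈ Set.Icc 0 b, a < t → 3 * ε / 2 < ρ t := by
    intro t ht hat
    by_contra h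
    push_neg at h
    exact absurd (le_csSup hAbdd ⟨ht, h⟩) (not_le.mpr hat)
  have hρaeq : ρ a = 3 * ε / 2 := by
    rcases eq_or_lt_of_le hρa with h | h
    · exact h
    · exfalso
      have hev : ∀ᶠ t in nhdsWithin a (Set.Icc 0 t₁), ρ t < 3 * ε / 2 :=
        (hcont a (hIccb haIcc)).eventually (isOpen_Iio.mem_nhds h)
      have hIoosub : Set.Ioo a b ⊆ Set.Icc 0 t₁ := fun t ht =>
        ⟨le_trans haIcc.1 (le_of_lt ht.1), le_trans (le_of_lt ht.2) hbIcc.2⟩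
      have hne : (nhdsWithin a (Set.Ioo a b)).NeBot := by
        refine mem_closure_iff_nhdsWithin_neBot.mp ?_
        rw [closure_Ioo (ne_of_lt hab)]
        exact ⟨le_refl _, le_of_lt hab⟩
      obtain ⟨t, ht2, htmem⟩ :=
        ((hev.filter_mono (nhdsWithin_mono a hIoosub)).and
          eventually_mem_nhdsWithin).exists
      have htA : t ∈ A := ⟨⟨le_trans haIcc.1 (le_of_lt htmem.1),
        le_of_lt htmem.2⟩, le_of_lt ht2⟩
      exact absurd (le_csSup hAbdd htA) (not_le.mpr htmem.1)
  -- bounds on `[a,b]`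
  have hbound : ∀ t ∈ Set.Icc a b, 3 * ε / 2 ≤ ρ t ∧ ρ t ≤ 2 * ε := by
    intro t ht
    constructor
    · rcases eq_or_lt_of_le ht.1 with h | h
      · rw [← h, hρaeq]
      · exact le_of_lt (hgt t ⟨le_trans haIcc.1 ht.1, ht.2⟩ h)
    · rcases eq_or_lt_of_le ht.2 with h | h
      · rw [h, hρbeq]
      · exact le_of_lt (hlt t (hIccb ⟨le_trans haIcc.1 ht.1, le_of_lt h⟩) h)
  -- derivative is nonpositive on `(a,b)`
  have hderiv : ∀ x ∈ Set.Ioo a b, HasDerivAt ρ (deriv ρ x) x ∧ deriv ρ x ≤ 0 := by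
    intro x hx
    have hx0 : 0 < x := lt_of_le_of_lt haIcc.1 hx.1
    have hxt₁ : x < t₁ := lt_of_lt_of_le hx.2 hbIcc.2
    have hxIcc : x ∈ Set.Icc 0 t₁ := ⟨le_of_lt hx0, le_of_lt hxt₁⟩
    have hSnhds : S ∈ nhds x := by
      refine Filter.mem_of_superset (isOpen_Ioo.mem_nhds ⟨hx0, hxt₁⟩) ?_
      rw [hS]
      intro t ht
      exact ⟨le_of_lt ht.1, lt_trans (EReal.coe_lt_coe_iff.mpr ht.2) ht₁T⟩
    obtain ⟨d, hd, hdle⟩ := hρ x (hsub hxIcc)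
    have hda : HasDerivAt ρ d x := hd.hasDerivAt hSnhds
    have hdeq : deriv ρ x = d := hda.deriv
    refine ⟨hdeq ▸ hda, ?_⟩
    rw [hdeq]
    have hσx : 0 ≤ σ x := hσ0 x (hsub hxIcc)
    obtain ⟨hlo, hhi⟩ := hbound x ⟨le_of_lt hx.1, le_of_lt hx.2⟩
    have hinner : 0 ≤ c₀ * ρ x - δ - C * (ρ x) ^ 2 := by
      nlinarith [mul_nonneg (le_of_lt hC) (mul_nonneg (sub_nonneg.mpr hhi) (sub_nonneg.mpr hlo))]
    nlinarith [mul_nonneg hσx hinner]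
  -- mean value theorem gives a contradiction
  obtain ⟨c, hc, hceq⟩ := exists_hasDerivAt_eq_slope ρ (deriv ρ) hab
    (hcont.mono (fun t ht => hIccb ⟨le_trans haIcc.1 ht.1, ht.2⟩))
    (fun x hx => (hderiv x hx).1)
  have hpos : 0 < deriv ρ c := by
    rw [hceq, hρbeq, hρaeq]
    exact div_pos (by linarith) (by linarith)
  exact absurd (hderiv c hc).2 (not_le.mpr hpos)
end

section
/- Let c₁, c₂ > 0. There do not exist continuous functions A, B : [0, ∞) → ℝ with A(0) > 0, B(0) > 0 such that for every t ≥ 0 the lower right Dini derivatives satisfy liminf_{h→0⁺} (A(t+h) − A(t))/h ≥ c₁·B(t)² and liminf_{h→0⁺} (B(t+h) − B(t))/h ≥ c₂·A(t)·B(t). -/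
open Filter

private lemma map_add_nhdsGT (x : ℝ) :
    map (fun h : ℝ => x + h) (nhdsWithin 0 (Set.Ioi 0)) = nhdsWithin x (Set.Ioi x) := by
  have := (Homeomorph.addLeft x).isEmbedding.map_nhdsWithin_eq (Set.Ioi (0:ℝ)) 0
  simpa [Set.image_const_add_Ioi] using this

/-- From an `EReal` lower-Dini bound, get an eventual strict lower bound on right slopes. -/
private lemma ev_slope_lower {A : ℝ → ℝ} {x c : ℝ}
    (h : ((c : ℝ) : EReal) ≤
      liminf (fun h : ℝ => (((A (x + h) - A x) / h : ℝ) : EReal))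
        (nhdsWithin 0 (Set.Ioi 0))) {ε : ℝ} (hε : 0 < ε) :
    ∀ᶠ z in nhdsWithin x (Set.Ioi x), c - ε < slope A x z := by
  have h1 : ((c - ε : ℝ) : EReal) <
      liminf (fun h : ℝ => (((A (x + h) - A x) / h : ℝ) : EReal))
        (nhdsWithin 0 (Set.Ioi 0)) :=
    lt_of_lt_of_le (by exact_mod_cast sub_lt_self c hε) h
  have h2 := Filter.eventually_lt_of_lt_liminf h1
  rw [← map_add_nhdsGT x, eventually_map]
  filter_upwards [h2, self_mem_nhdsWithin] with t ht ht0
  have ht0' : (0:ℝ) < t := ht0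
  have : (c - ε : ℝ) < (A (x + t) - A x) / t := by exact_mod_cast ht
  rw [slope_def_field]
  have : (A (x + t) - A x) / (x + t - x) = (A (x + t) - A x) / t := by ring_nf
  rw [this]
  exact_mod_cast ht

set_option maxHeartbeats 2000000 in
/-- Dini-derivative form of the comparison blow-up (Theorems 11.3 and 13.4):
there are no continuous `A, B : [0,∞) → ℝ` with positive initial data whose
lower right Dini derivatives satisfy `D⁺A ≥ c₁B²` and `D⁺B ≥ c₂AB` for all
`t ≥ 0`. -/
theorem no_global_dini_comparison_solution (c₁ c₂ : ℝ) (hc₁ : 0 < c₁) (hc₂ : 0 < c₂) :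
    ¬ ∃ A B : ℝ → ℝ,
      ContinuousOn A (Set.Ici 0) ∧ ContinuousOn B (Set.Ici 0) ∧
      0 < A 0 ∧ 0 < B 0 ∧
      ∀ t : ℝ, 0 ≤ t →
        ((c₁ * (B t) ^ 2 : ℝ) : EReal) ≤
          liminf (fun h : ℝ => (((A (t + h) - A t) / h : ℝ) : EReal))
            (nhdsWithin 0 (Set.Ioi 0)) ∧
        ((c₂ * A t * B t : ℝ) : EReal) ≤
          liminf (fun h : ℝ => (((B (t + h) - B t) / h : ℝ) : EReal))
            (nhdsWithin 0 (Set.Ioi 0)) := by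
  rintro ⟨A, B, hAc, hBc, hA0, hB0, hD⟩
  -- constants for the comparison solution
  obtain ⟨α, hα⟩ : ∃ α : ℝ, α = 2 / c₂ := ⟨_, rfl⟩
  obtain ⟨β, hβ⟩ : ∃ β : ℝ, β = 2 / Real.sqrt (c₁ * c₂) := ⟨_, rfl⟩
  have hsq : 0 < Real.sqrt (c₁ * c₂) := Real.sqrt_pos.2 (mul_pos hc₁ hc₂)
  have hαpos : 0 < α := by rw [hα]; positivity
  have hβpos : 0 < β := by rw [hβ]; positivity
  have hc₁β : c₁ * β ^ 2 = 4 / c₂ := by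
    have hs : Real.sqrt (c₁ * c₂) ^ 2 = c₁ * c₂ :=
      Real.sq_sqrt (le_of_lt (mul_pos hc₁ hc₂))
    rw [hβ, div_pow, hs]
    field_simp
    ring
  obtain ⟨T, hT⟩ : ∃ T : ℝ, T = max (α / A 0) (β / B 0) + 1 := ⟨_, rfl⟩
  have hTa : α / A 0 < T := by
    have := le_max_left (α / A 0) (β / B 0); rw [hT]; linarith
  have hTb : β / B 0 < T := by
    have := le_max_right (α / A 0) (β / B 0); rw [hT]; linarith
  have hT0 : 0 < T := lt_trans (div_pos hαpos hA0) hTa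
  have hXA0 : α / T ≤ A 0 := by
    rw [div_le_iff₀ hT0]
    have h2 : α = (α / A 0) * A 0 := by field_simp
    nlinarith
  have hYB0 : β / T ≤ B 0 := by
    rw [div_le_iff₀ hT0]
    have h2 : β = (β / B 0) * B 0 := by field_simp
    nlinarith
  -- bound B on [0, T]
  obtain ⟨M, hM⟩ : ∃ M, ∀ s ∈ Set.Icc (0:ℝ) T, B s ≤ M := by
    obtain ⟨M, hM⟩ := isCompact_Icc.exists_bound_of_continuousOn
      (hBc.mono (fun s hs => hs.1))
    exact ⟨M, fun s hs => le_trans (le_abs_self _) (hM s hs)⟩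
  have hMB0 : B 0 ≤ M := hM 0 ⟨le_rfl, le_of_lt hT0⟩
  have hM0 : 0 < M + 1 := by linarith
  obtain ⟨t₀, ht₀⟩ : ∃ t₀ : ℝ, t₀ = T - β / (M + 1) := ⟨_, rfl⟩
  have hδpos : 0 < β / (M + 1) := div_pos hβpos hM0
  have ht₀T : t₀ < T := by simp only [ht₀]; linarith
  have ht₀0 : 0 ≤ t₀ := by
    have h1 : β / (M + 1) < β / B 0 := by
      apply div_lt_div_of_pos_left hβpos hB0; linarith
    simp only [ht₀]; linarith
  -- the comparison functions
  obtain ⟨X, hX⟩ : ∃ X : ℝ → ℝ, X = fun t => α / (T - t) := ⟨_, rfl⟩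
  obtain ⟨Y, hY⟩ : ∃ Y : ℝ → ℝ, Y = fun t => β / (T - t) := ⟨_, rfl⟩
  have hTne : ∀ x : ℝ, x < T → T - x ≠ 0 := fun x hx => by
    intro h; linarith [sub_pos.2 hx, h]
  have hXd : ∀ x : ℝ, x < T → HasDerivAt X (α / (T - x) ^ 2) x := by
    intro x hx
    rw [hX]
    have h1 : HasDerivAt (fun t : ℝ => T - t) (-1) x := by
      simpa using (hasDerivAt_id x).const_sub T
    have h2 := (h1.inv (hTne x hx)).const_mul α
    convert h2 using 1
    · rfl
    · rfl
    · funext t; simp [div_eq_mul_inv]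
    · ring
  have hYd : ∀ x : ℝ, x < T → HasDerivAt Y (β / (T - x) ^ 2) x := by
    intro x hx
    rw [hY]
    have h1 : HasDerivAt (fun t : ℝ => T - t) (-1) x := by
      simpa using (hasDerivAt_id x).const_sub T
    have h2 := (h1.inv (hTne x hx)).const_mul β
    convert h2 using 1
    · rfl
    · rfl
    · funext t; simp [div_eq_mul_inv]
    · ring
  -- the fencing setup
  obtain ⟨f, hf⟩ : ∃ f : ℝ → ℝ, f = fun t => max (X t - A t) (Y t - B t) := ⟨_, rfl⟩
  obtain ⟨f', hf'⟩ : ∃ f' : ℝ → ℝ, f' = fun x =>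
    max (α / (T - x) ^ 2 - c₁ * (B x) ^ 2) (β / (T - x) ^ 2 - c₂ * A x * B x) := ⟨_, rfl⟩
  have hXc : ContinuousOn X (Set.Icc 0 t₀) := by
    rw [hX]
    apply continuousOn_const.div (continuousOn_const.sub continuousOn_id)
    intro x hx; exact hTne x (lt_of_le_of_lt hx.2 ht₀T)
  have hYc : ContinuousOn Y (Set.Icc 0 t₀) := by
    rw [hY]
    apply continuousOn_const.div (continuousOn_const.sub continuousOn_id)
    intro x hx; exact hTne x (lt_of_le_of_lt hx.2 ht₀T)
  have hsub : Set.Icc (0:ℝ) t₀ ⊆ Set.Ici 0 := fun x hx => hx.1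
  have hfc : ContinuousOn f (Set.Icc 0 t₀) := by
    rw [hf]
    exact (hXc.sub (hAc.mono hsub)).sup (hYc.sub (hBc.mono hsub))
  -- the key slope estimate
  have key : ∀ x ∈ Set.Ico (0:ℝ) t₀, ∀ r, f' x < r →
      ∃ᶠ z in nhdsWithin x (Set.Ioi x), slope f x z < r := by
    intro x hx r hr
    have hxT : x < T := lt_trans hx.2 ht₀T
    rw [hf'] at hr
    have hr1 : α / (T - x) ^ 2 - c₁ * (B x) ^ 2 < r := lt_of_le_of_lt (le_max_left _ _) hr
    have hr2 : β / (T - x) ^ 2 - c₂ * A x * B x < r := lt_of_le_of_lt (le_max_right _ _) hr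
    obtain ⟨ε, hεdef⟩ : ∃ ε : ℝ, ε = min (r - (α / (T - x) ^ 2 - c₁ * (B x) ^ 2))
        (r - (β / (T - x) ^ 2 - c₂ * A x * B x)) / 2 := ⟨_, rfl⟩
    have hεpos : 0 < ε := by
      rw [hεdef]
      apply div_pos _ two_pos
      exact lt_min (by linarith) (by linarith)
    have hε1 : α / (T - x) ^ 2 - c₁ * (B x) ^ 2 + 2 * ε ≤ r := by
      have := min_le_left (r - (α / (T - x) ^ 2 - c₁ * (B x) ^ 2))
        (r - (β / (T - x) ^ 2 - c₂ * A x * B x))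
      rw [hεdef]; linarith
    have hε2 : β / (T - x) ^ 2 - c₂ * A x * B x + 2 * ε ≤ r := by
      have := min_le_right (r - (α / (T - x) ^ 2 - c₁ * (B x) ^ 2))
        (r - (β / (T - x) ^ 2 - c₂ * A x * B x))
      rw [hεdef]; linarith
    -- slopes of X and Y eventually close to derivative
    have hXs : ∀ᶠ z in nhdsWithin x (Set.Ioi x), slope X x z < α / (T - x) ^ 2 + ε := by
      have := (hasDerivAt_iff_tendsto_slope.1 (hXd x hxT)).eventually
        (eventually_lt_nhds (by linarith : α / (T - x) ^ 2 < α / (T - x) ^ 2 + ε))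
      exact nhdsWithin_mono x (fun z (hz : x < z) => ne_of_gt hz) this
    have hYs : ∀ᶠ z in nhdsWithin x (Set.Ioi x), slope Y x z < β / (T - x) ^ 2 + ε := by
      have := (hasDerivAt_iff_tendsto_slope.1 (hYd x hxT)).eventually
        (eventually_lt_nhds (by linarith : β / (T - x) ^ 2 < β / (T - x) ^ 2 + ε))
      exact nhdsWithin_mono x (fun z (hz : x < z) => ne_of_gt hz) this
    -- slopes of A and B eventually bounded below via Dini hypothesis
    have hAs : ∀ᶠ z in nhdsWithin x (Set.Ioi x), c₁ * (B x) ^ 2 - ε < slope A x z :=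
      ev_slope_lower (hD x hx.1).1 hεpos
    have hBs : ∀ᶠ z in nhdsWithin x (Set.Ioi x), c₂ * A x * B x - ε < slope B x z :=
      ev_slope_lower (hD x hx.1).2 hεpos
    apply Filter.Eventually.frequently
    filter_upwards [hXs, hYs, hAs, hBs, self_mem_nhdsWithin] with z h1 h2 h3 h4 hz
    have hzx : (0:ℝ) < z - x := sub_pos.2 hz
    have e1 : slope (fun t => X t - A t) x z = slope X x z - slope A x z := by
      simp only [slope_def_field]; ring
    have e2 : slope (fun t => Y t - B t) x z = slope Y x z - slope B x z := by
      simp only [slope_def_field]; ring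
    have hnum : f z - f x ≤ max ((X z - A z) - (X x - A x)) ((Y z - B z) - (Y x - B x)) := by
      rw [hf]; simp only []
      rcases le_total (X z - A z) (Y z - B z) with h | h
      · rw [max_eq_right h]
        have h5 := le_max_right (X x - A x) (Y x - B x)
        have h6 := le_max_right ((X z - A z) - (X x - A x)) ((Y z - B z) - (Y x - B x))
        linarith
      · rw [max_eq_left h]
        have h5 := le_max_left (X x - A x) (Y x - B x)
        have h6 := le_max_left ((X z - A z) - (X x - A x)) ((Y z - B z) - (Y x - B x))
        linarith
    have hmax : slope f x z ≤ max (slope (fun t => X t - A t) x z)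
        (slope (fun t => Y t - B t) x z) := by
      simp only [slope_def_field]
      rw [max_div_div_right hzx.le]
      exact (div_le_div_iff_of_pos_right hzx).2 hnum
    refine lt_of_le_of_lt hmax (max_lt ?_ ?_)
    · rw [e1]; linarith
    · rw [e2]; linarith
  -- initial condition
  have ha : f 0 ≤ 0 := by
    rw [hf]
    simp only [hX, hY, sub_zero]
    exact max_le (by linarith) (by linarith)
  -- contact bound
  have hbound : ∀ x ∈ Set.Ico (0:ℝ) t₀, f x = 0 → f' x < 0 := by
    intro x hx hfx
    rw [hf] at hfx
    rw [hf']
    have hxT : x < T := lt_trans hx.2 ht₀T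
    have hTx : 0 < T - x := sub_pos.2 hxT
    have h1 : X x - A x ≤ 0 := le_trans (le_max_left _ _) hfx.le
    have h2 : Y x - B x ≤ 0 := le_trans (le_max_right _ _) hfx.le
    have hXpos : 0 < X x := by rw [hX]; exact div_pos hαpos hTx
    have hYpos : 0 < Y x := by rw [hY]; exact div_pos hβpos hTx
    have hAx : X x ≤ A x := by linarith
    have hBx : Y x ≤ B x := by linarith
    have hBY2 : Y x ^ 2 ≤ B x ^ 2 := by nlinarith
    apply max_lt
    · -- α/(T-x)² - c₁ B² < 0, using c₁ B² ≥ c₁ Y² = (4/c₂)/(T-x)² > α/(T-x)²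
      have hY2 : c₁ * Y x ^ 2 = (4 / c₂) / (T - x) ^ 2 := by
        rw [hY]
        simp only []
        rw [div_pow, ← hc₁β]; ring
      have : α / (T - x) ^ 2 < c₁ * Y x ^ 2 := by
        rw [hY2, hα]
        rw [div_lt_div_iff_of_pos_right (by positivity : (0:ℝ) < (T - x) ^ 2)]
        rw [div_lt_div_iff_of_pos_right hc₂]
        norm_num
      have h7 : c₁ * Y x ^ 2 ≤ c₁ * B x ^ 2 := mul_le_mul_of_nonneg_left hBY2 hc₁.le
      linarith
    · -- β/(T-x)² - c₂ A B < 0, using c₂ A B ≥ c₂ X Y = 2β/(T-x)²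
      have hXx : X x = α / (T - x) := by rw [hX]
      have hYx : Y x = β / (T - x) := by rw [hY]
      have hTxne : T - x ≠ 0 := hTne x hxT
      have hXY : c₂ * X x * Y x = 2 * β / (T - x) ^ 2 := by
        rw [hXx, hYx, hα]
        field_simp
      have h3 : c₂ * X x * Y x ≤ c₂ * A x * B x := by
        rw [mul_assoc, mul_assoc]
        exact mul_le_mul_of_nonneg_left
          (mul_le_mul hAx hBx hYpos.le (le_trans hXpos.le hAx)) hc₂.le
      have : β / (T - x) ^ 2 < 2 * β / (T - x) ^ 2 := by
        rw [div_lt_div_iff_of_pos_right (by positivity : (0:ℝ) < (T - x) ^ 2)]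
        linarith
      linarith [hXY ▸ h3]
  -- apply the fencing theorem
  have hfin := image_le_of_liminf_slope_right_lt_deriv_boundary'
    (f := f) (f' := f') (a := 0) (b := t₀) hfc key (B := fun _ => (0:ℝ)) (B' := fun _ => (0:ℝ))
    ha continuousOn_const (fun x _ => hasDerivWithinAt_const x _ 0)
    hbound (Set.right_mem_Icc.2 ht₀0)
  -- conclude: Y t₀ ≤ B t₀ but Y t₀ = M + 1 > M ≥ B t₀
  have hYB : Y t₀ ≤ B t₀ := by
    rw [hf] at hfin
    have h9 : Y t₀ - B t₀ ≤ (0:ℝ) :=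
      le_trans (le_max_right (X t₀ - A t₀) (Y t₀ - B t₀)) hfin
    linarith
  have hYt₀ : Y t₀ = M + 1 := by
    rw [hY]
    simp only [ht₀]
    rw [sub_sub_cancel]
    field_simp
  have := hM t₀ ⟨ht₀0, ht₀T.le⟩
  rw [hYt₀] at hYB
  linarith
end
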